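/- (Fast geometric convergence) Let $(Y_n)_{n\ge0}$ be nonnegative reals satisfying $Y_{n+1} \le C b^n Y_n^{1+\alpha}$ for all $n\ge 0$, where $C>0$, $b>1$, $\alpha>0$. If $Y_0 \le C^{-1/\alpha} b^{-1/\alpha^2}$, then $Y_n \to 0$ as $n\to\infty$; in fact $Y_n \le b^{-n/\alpha} Y_0$ for all $n$. -/

import Mathlib

open Filter Real

/-- Fast geometric convergence: if `Y_{n+1} ≤ C bⁿ Y_n^{1+α}` and
`Y₀ ≤ C^{-1/α} b^{-1/α²}`, then `Y_n ≤ b^{-n/α} Y₀` and `Y_n → 0`. -/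
theorem fast_geometric_convergence (C b α : ℝ) (hC : 0 < C) (hb : 1 < b) (hα : 0 < α)
    (Y : ℕ → ℝ) (hY : ∀ n, 0 ≤ Y n)
    (hrec : ∀ n : ℕ, Y (n + 1) ≤ C * b ^ (n : ℝ) * (Y n) ^ (1 + α))
    (hsmall : Y 0 ≤ C ^ (-1 / α) * b ^ (-1 / α ^ 2)) :
    (∀ n : ℕ, Y n ≤ b ^ (-(n : ℝ) / α) * Y 0) ∧
      Tendsto Y atTop (nhds 0) := by
  have hb0 : (0 : ℝ) < b := lt_trans one_pos hb
  have hα' : α ≠ 0 := ne_of_gt hα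
  -- key smallness: C * Y0^α ≤ b^(-1/α)
  have hkey : C * (Y 0) ^ α ≤ b ^ (-1 / α) := by
    have h1 : (Y 0) ^ α ≤ (C ^ (-1 / α) * b ^ (-1 / α ^ 2)) ^ α :=
      Real.rpow_le_rpow (hY 0) hsmall hα.le
    have h2 : (C ^ (-1 / α) * b ^ (-1 / α ^ 2)) ^ α = C⁻¹ * b ^ (-1 / α) := by
      rw [Real.mul_rpow (Real.rpow_nonneg hC.le _) (Real.rpow_nonneg hb0.le _),
        ← Real.rpow_mul hC.le, ← Real.rpow_mul hb0.le]
      congr 1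
      · rw [show -1 / α * α = -1 by field_simp, Real.rpow_neg_one]
      · congr 1
        field_simp
    calc C * (Y 0) ^ α ≤ C * (C⁻¹ * b ^ (-1 / α)) := by
          rw [← h2]; exact mul_le_mul_of_nonneg_left h1 hC.le
      _ = b ^ (-1 / α) := by field_simp
  have hmain : ∀ n : ℕ, Y n ≤ b ^ (-(n : ℝ) / α) * Y 0 := by
    intro n
    induction n with
    | zero => simp
    | succ n ih =>
      have hbn : (0 : ℝ) ≤ b ^ (-(n : ℝ) / α) * Y 0 :=
        mul_nonneg (Real.rpow_nonneg hb0.le _) (hY 0)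
      have h1 : (Y n) ^ (1 + α) ≤ (b ^ (-(n : ℝ) / α) * Y 0) ^ (1 + α) :=
        Real.rpow_le_rpow (hY n) ih (by positivity)
      have hbnne : (b : ℝ) ^ (n : ℝ) ≠ 0 := (Real.rpow_pos_of_pos hb0 _).ne'
      have h2 : C * b ^ (n : ℝ) * (b ^ (-(n : ℝ) / α) * Y 0) ^ (1 + α)
          = (C * (Y 0) ^ α) * (b ^ (-(n : ℝ) / α) * Y 0) := by
        rw [Real.mul_rpow (Real.rpow_nonneg hb0.le _) (hY 0),
          ← Real.rpow_mul hb0.le,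
          show (Y 0) ^ (1 + α) = Y 0 * (Y 0) ^ α by
            rw [Real.rpow_add' (hY 0) (by positivity), Real.rpow_one],
          show -(n : ℝ) / α * (1 + α) = -(n : ℝ) / α + (-(n : ℝ)) by field_simp; ring,
          Real.rpow_add hb0, Real.rpow_neg hb0.le]
        field_simp
      calc Y (n + 1) ≤ C * b ^ (n : ℝ) * (Y n) ^ (1 + α) := hrec n
        _ ≤ C * b ^ (n : ℝ) * (b ^ (-(n : ℝ) / α) * Y 0) ^ (1 + α) := by
            apply mul_le_mul_of_nonneg_left h1 (by positivity)
        _ = (C * (Y 0) ^ α) * (b ^ (-(n : ℝ) / α) * Y 0) := h2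
        _ ≤ b ^ (-1 / α) * (b ^ (-(n : ℝ) / α) * Y 0) :=
            mul_le_mul_of_nonneg_right hkey hbn
        _ = b ^ (-((n + 1 : ℕ) : ℝ) / α) * Y 0 := by
            rw [← mul_assoc, ← Real.rpow_add hb0]
            congr 2
            push_cast
            ring
  refine ⟨hmain, ?_⟩
  have hlim : Tendsto (fun n : ℕ => b ^ (-(n : ℝ) / α) * Y 0) atTop (nhds 0) := by
    have : ∀ n : ℕ, b ^ (-(n : ℝ) / α) * Y 0 = (b ^ (-1 / α)) ^ n * Y 0 := by
      intro n
      rw [← Real.rpow_natCast (b ^ (-1/α)) n, ← Real.rpow_mul hb0.le]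
      congr 1
      ring
    simp only [this]
    have hr : |b ^ (-1 / α)| < 1 := by
      rw [abs_of_nonneg (Real.rpow_nonneg hb0.le _)]
      apply Real.rpow_lt_one_of_one_lt_of_neg hb
      rw [neg_div]
      simp only [Left.neg_neg_iff]
      positivity
    simpa using (tendsto_pow_atTop_nhds_zero_of_abs_lt_one hr).mul_const (Y 0)
  exact squeeze_zero hY hmain hlim
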